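/- Let G be a finite simple graph on vertex set V with graph Laplacian Δ, and suppose j ∈ V is a joint: V ∖ {j} is partitioned into two nonempty sets B (the big set) and C (the small set) such that no edge of G joins a vertex of B to a vertex of C. If the observation set satisfies S ⊆ B and E = V ∖ S, then for every c ∈ C the column of Δ(S;E) indexed by c is zero; consequently Δ(S;E) does not have full column rank, i.e. rank Δ(S;E) < |E|. -/
import Mathlib

open Matrix


/-- The graph Laplacian of a finite simple graph on `Fin N`. -/
def graphLaplacian {N : ℕ} (G : SimpleGraph (Fin N)) [DecidableRel G.Adj] :
    Matrix (Fin N) (Fin N) ℝ :=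
  Matrix.of fun k l => if k = l then -(G.degree k : ℝ) else if G.Adj k l then 1 else 0

/-- A matrix with a zero column has rank less than the number of columns. -/
lemma rank_lt_of_zero_col {m n : Type*} [Fintype m] [Fintype n] [DecidableEq n]
    (A : Matrix m n ℝ) (c : n) (hc : ∀ i, A i c = 0) :
    A.rank < Fintype.card n := by
  have hT : A.rank = Aᵀ.rank := (Matrix.rank_transpose A).symm
  rw [hT, Matrix.rank]
  have hle : LinearMap.range Aᵀ.mulVecLin ≤ LinearMap.ker (LinearMap.proj (R := ℝ)
      (φ := fun _ : n => ℝ) c) := by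
    rintro _ ⟨v, rfl⟩
    simp only [LinearMap.mem_ker, LinearMap.proj_apply, Matrix.mulVecLin_apply]
    simp [Matrix.mulVec, dotProduct, Matrix.transpose_apply, hc]
  have h1 : Module.finrank ℝ (LinearMap.range Aᵀ.mulVecLin) ≤
      Module.finrank ℝ (LinearMap.ker (LinearMap.proj (R := ℝ) (φ := fun _ : n => ℝ) c)) :=
    Submodule.finrank_mono hle
  have hproj : Function.Surjective (LinearMap.proj (R := ℝ) (φ := fun _ : n => ℝ) c) := by
    intro x; exact ⟨Pi.single c x, by simp⟩
  have h2 := LinearMap.finrank_range_add_finrank_ker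
      (LinearMap.proj (R := ℝ) (φ := fun _ : n => ℝ) c)
  rw [LinearMap.range_eq_top.mpr hproj, finrank_top] at h2
  have hpi : Module.finrank ℝ (∀ _ : n, ℝ) = Fintype.card n := by
    simp [Module.finrank_pi]
  have hR : Module.finrank ℝ ℝ = 1 := Module.finrank_self ℝ
  omega

/-- If `j` is a joint vertex whose removal splits the remaining vertices into two nonempty
sets `B` and `C` with no edges between them, and all observation vertices are taken from the
big set `B` (`S ⊆ B`, `E = V \ S`), then every column of `Δ(S;E)` indexed by a vertex of `C`
is zero; consequently `Δ(S;E)` does not have full column rank. -/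
theorem joint_obstructs_full_rank
    {N : ℕ} (G : SimpleGraph (Fin N)) [DecidableRel G.Adj]
    (j : Fin N) (B C : Finset (Fin N))
    (hBC : B ∪ C = Finset.univ \ {j}) (hdisj : Disjoint B C)
    (hBne : B.Nonempty) (hCne : C.Nonempty)
    (hnoedge : ∀ b ∈ B, ∀ c ∈ C, ¬ G.Adj b c)
    (S : Finset (Fin N)) (hSB : S ⊆ B) :
    (∀ c ∈ C, ∀ s ∈ S, graphLaplacian G s c = 0) ∧
    ((graphLaplacian G).submatrix
        (fun s : {x // x ∈ S} => (s : Fin N))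
        (fun e : {x // x ∈ Sᶜ} => (e : Fin N))).rank < Sᶜ.card := by
  have hcol : ∀ c ∈ C, ∀ s ∈ S, graphLaplacian G s c = 0 := by
    intro c hc s hs
    have hsB : s ∈ B := hSB hs
    have hne : s ≠ c := by
      intro h; subst h
      exact (Finset.disjoint_left.mp hdisj) hsB hc
    have hna : ¬ G.Adj s c := hnoedge s hsB c hc
    simp [graphLaplacian, hne, hna]
  refine ⟨hcol, ?_⟩
  obtain ⟨c, hc⟩ := hCne
  have hcS : c ∈ Sᶜ := by
    simp only [Finset.mem_compl]
    intro h
    exact (Finset.disjoint_left.mp hdisj) (hSB h) hc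
  have := rank_lt_of_zero_col
    ((graphLaplacian G).submatrix
        (fun s : {x // x ∈ S} => (s : Fin N))
        (fun e : {x // x ∈ Sᶜ} => (e : Fin N)))
    ⟨c, hcS⟩ (fun i => hcol c hc i i.2)
  rwa [Fintype.card_coe] at this
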